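/- arXiv:1712.09894 — 2 statements merged into one kernel-verified Lean document; each statement's English description precedes it below -/
import Mathlib

section
/- Let δ > 0, θ > 0, and λ ∈ ℝ, and let s > 0 be a real number with s^δ > |λ|. Then the Laplace transform of t^{θ−1} E_{δ,θ}(−λ t^δ) equals s^{δ−θ}/(s^δ + λ); that is, ∫_0^∞ e^{−st} t^{θ−1} (∑_{k=0}^∞ (−λ)^k t^{δk} / Γ(δk + θ)) dt = s^{δ−θ}/(s^δ + λ). -/
open MeasureTheory Real Set

lemma integrableOn_rpow_mul_exp_neg_smul {a s : ℝ} (ha : 0 < a) (hs : 0 < s) :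
    IntegrableOn (fun t : ℝ => t ^ (a - 1) * Real.exp (-(s * t))) (Ioi 0) := by
  have := integrableOn_rpow_mul_exp_neg_mul_rpow (p := 1) (s := a - 1) (b := s)
    (by linarith) zero_lt_one hs
  refine this.congr_fun (fun t ht => ?_) measurableSet_Ioi
  simp only [Real.rpow_one, neg_mul]

/-- For `δ, θ > 0`, `λ ∈ ℝ` and `s > 0` with `s^δ > |λ|`, the Laplace transform of
`t^{θ−1} E_{δ,θ}(−λ t^δ)` equals `s^{δ−θ}/(s^δ + λ)`. -/
theorem laplace_mittagLeffler (δ θ lam s : ℝ) (hδ : 0 < δ) (hθ : 0 < θ)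
    (hs : 0 < s) (hsδ : |lam| < s ^ δ) :
    ∫ t in Set.Ioi (0 : ℝ),
        Real.exp (-s * t) * (t ^ (θ - 1) *
          ∑' k : ℕ, (-lam) ^ k * t ^ (δ * k) / Real.Gamma (δ * k + θ)) =
      s ^ (δ - θ) / (s ^ δ + lam) := by
  set F : ℕ → ℝ → ℝ := fun k t =>
    Real.exp (-s * t) * (t ^ (θ - 1) * ((-lam) ^ k * t ^ (δ * k) / Real.Gamma (δ * k + θ)))
  set a : ℕ → ℝ := fun k => δ * k + θ with ha_def
  have ha : ∀ k, 0 < a k := fun k => by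
    have : (0:ℝ) ≤ δ * k := by positivity
    simp only [ha_def]; linarith
  have hGamma : ∀ k, 0 < Real.Gamma (a k) := fun k => Real.Gamma_pos_of_pos (ha k)
  -- pointwise form of F on Ioi 0
  have hF_eq : ∀ k, ∀ t ∈ Ioi (0:ℝ), F k t =
      ((-lam) ^ k / Real.Gamma (a k)) * (t ^ (a k - 1) * Real.exp (-(s * t))) := by
    intro k t ht
    have ht' : (0:ℝ) < t := ht
    have : t ^ (θ - 1) * t ^ (δ * k) = t ^ (a k - 1) := by
      rw [← Real.rpow_add ht']; simp only [ha_def]; ring_nf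
    simp only [F, neg_mul]
    rw [← this]; simp only [ha_def]; ring
  -- integral of each term
  have hF_int : ∀ k, IntegrableOn (F k) (Ioi 0) := by
    intro k
    have h : IntegrableOn
        (fun t : ℝ => ((-lam) ^ k / Real.Gamma (a k)) * (t ^ (a k - 1) * Real.exp (-(s * t))))
        (Ioi 0) := (integrableOn_rpow_mul_exp_neg_smul (ha k) hs).const_mul _
    exact h.congr_fun (fun t ht => (hF_eq k t ht).symm) measurableSet_Ioi
  have hF_integral : ∀ k, ∫ t in Ioi (0:ℝ), F k t = (-lam) ^ k * (1 / s) ^ (a k) := by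
    intro k
    rw [setIntegral_congr_fun measurableSet_Ioi (hF_eq k)]
    rw [MeasureTheory.integral_const_mul, Real.integral_rpow_mul_exp_neg_mul_Ioi (ha k) hs]
    have hG := (hGamma k).ne'
    field_simp
  have hF_norm_integral : ∀ k, ∫ t in Ioi (0:ℝ), ‖F k t‖ = |lam| ^ k * (1 / s) ^ (a k) := by
    intro k
    have : ∀ t ∈ Ioi (0:ℝ), ‖F k t‖ =
        (|lam| ^ k / Real.Gamma (a k)) * (t ^ (a k - 1) * Real.exp (-(s * t))) := by
      intro t ht
      have ht' : (0:ℝ) < t := ht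
      rw [Real.norm_eq_abs, hF_eq k t ht, abs_mul, abs_div, abs_pow, abs_neg,
        abs_of_pos (hGamma k), abs_mul, abs_of_pos (Real.rpow_pos_of_pos ht' _),
        abs_of_pos (Real.exp_pos _)]
    rw [setIntegral_congr_fun measurableSet_Ioi this,
      MeasureTheory.integral_const_mul, Real.integral_rpow_mul_exp_neg_mul_Ioi (ha k) hs]
    have hG := (hGamma k).ne'
    field_simp
  -- summability of norm integrals
  have hr : |lam| * (1 / s) ^ δ < 1 := by
    have hsd : (0:ℝ) < s ^ δ := Real.rpow_pos_of_pos hs δ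
    rw [one_div, ← Real.rpow_neg_one, ← Real.rpow_mul hs.le]
    rw [show (-1:ℝ) * δ = -δ by ring, Real.rpow_neg hs.le]
    rw [mul_inv_lt_iff₀ hsd, one_mul]
    exact hsδ
  have hterm : ∀ (c : ℝ) (k : ℕ), c ^ k * (1 / s) ^ (a k) =
      (1 / s) ^ θ * (c * (1 / s) ^ δ) ^ k := by
    intro c k
    have h1s : (0:ℝ) < 1 / s := by positivity
    rw [ha_def]
    rw [Real.rpow_add h1s, mul_pow, ← Real.rpow_natCast ((1/s) ^ δ) k,
      ← Real.rpow_mul h1s.le]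
    ring
  have hF_sum : Summable fun k => ∫ t in Ioi (0:ℝ), ‖F k t‖ := by
    simp only [hF_norm_integral]
    simp only [fun k => hterm |lam| k]
    exact (summable_geometric_of_lt_one (by positivity) hr).mul_left _
  -- swap sum and integral
  have hswap : ∫ t in Ioi (0:ℝ), ∑' k, F k t = ∑' k, ∫ t in Ioi (0:ℝ), F k t :=
    (integral_tsum_of_summable_integral_norm hF_int hF_sum).symm
  have hrw : ∀ t : ℝ, Real.exp (-s * t) * (t ^ (θ - 1) *
      ∑' k : ℕ, (-lam) ^ k * t ^ (δ * k) / Real.Gamma (δ * k + θ)) = ∑' k, F k t := by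
    intro t
    rw [← tsum_mul_left, ← tsum_mul_left]
  calc ∫ t in Set.Ioi (0 : ℝ),
        Real.exp (-s * t) * (t ^ (θ - 1) *
          ∑' k : ℕ, (-lam) ^ k * t ^ (δ * k) / Real.Gamma (δ * k + θ))
      = ∫ t in Ioi (0:ℝ), ∑' k, F k t := by simp_rw [hrw]
    _ = ∑' k, ∫ t in Ioi (0:ℝ), F k t := hswap
    _ = ∑' k : ℕ, (1 / s) ^ θ * (-lam * (1 / s) ^ δ) ^ k := by
        simp only [hF_integral]
        exact tsum_congr fun k => by
          rw [show ((-lam:ℝ)) ^ k = (-lam) ^ k from rfl, hterm (-lam) k]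
    _ = (1 / s) ^ θ * (1 - (-lam * (1 / s) ^ δ))⁻¹ := by
        rw [tsum_mul_left, tsum_geometric_of_norm_lt_one (by
          rw [Real.norm_eq_abs, abs_mul, abs_neg,
            abs_of_pos (Real.rpow_pos_of_pos (by positivity : (0:ℝ) < 1/s) δ)]
          exact hr)]
    _ = s ^ (δ - θ) / (s ^ δ + lam) := by
        have hsd : (0:ℝ) < s ^ δ := Real.rpow_pos_of_pos hs δ
        have h1 : (1 / s : ℝ) ^ θ = (s ^ θ)⁻¹ := by
          rw [one_div, ← Real.rpow_neg_one, ← Real.rpow_mul hs.le,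
            show (-1:ℝ) * θ = -θ by ring, Real.rpow_neg hs.le]
        have h2 : (1 / s : ℝ) ^ δ = (s ^ δ)⁻¹ := by
          rw [one_div, ← Real.rpow_neg_one, ← Real.rpow_mul hs.le,
            show (-1:ℝ) * δ = -δ by ring, Real.rpow_neg hs.le]
        have h3 : s ^ (δ - θ) = s ^ δ * (s ^ θ)⁻¹ := by
          rw [← Real.rpow_neg hs.le, ← Real.rpow_add hs]; ring_nf
        have h4 : (0:ℝ) < s ^ δ + lam := by
          have := neg_abs_le lam; linarith
        rw [h1, h2, h3]
        field_simp
        rw [sub_neg_eq_add, div_self h4.ne']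
end

section
/- Let 0 < α < 1, let f : [0,∞) → ℝ be continuously differentiable with |f(t)| ≤ M e^{ct} and |f'(t)| ≤ M e^{ct} for some constants M > 0 and c ≥ 0, and let s > c. Then the Laplace transform of the left Caputo fractional derivative of f of order α satisfies L{^cD_{0+}^α f}(s) = s^α L{f}(s) − s^{α−1} f(0), where ^cD_{0+}^α f(t) = (1/Γ(1 − α)) ∫_0^t (t − u)^{−α} f'(u) du. -/
open MeasureTheory Real Set Filter

lemma aux_gamma_int (α s : ℝ) (hα₁ : 0 < α) (hα₂ : α < 1) (hs : 0 < s) :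
    IntegrableOn (fun v : ℝ => Real.exp (-s * v) * v ^ (-α)) (Ioi 0) := by
  have h := integrableOn_rpow_mul_exp_neg_mul_rpow (p := 1) (s := -α) (b := s)
    (by linarith) zero_lt_one hs
  simpa [mul_comm] using h

lemma aux_gamma_val (α s : ℝ) (hα₁ : 0 < α) (hα₂ : α < 1) (hs : 0 < s) :
    ∫ v in Ioi (0:ℝ), Real.exp (-s * v) * v ^ (-α)
      = s ^ (α - 1) * Real.Gamma (1 - α) := by
  have h := Real.integral_rpow_mul_exp_neg_mul_Ioi (a := 1 - α) (r := s)
    (by linarith) hs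
  have h2 : ∫ v in Ioi (0:ℝ), Real.exp (-s * v) * v ^ (-α)
      = ∫ t in Ioi (0:ℝ), t ^ (1 - α - 1) * Real.exp (-(s * t)) := by
    refine setIntegral_congr_fun measurableSet_Ioi fun t ht => ?_
    rw [mul_comm]
    norm_num
  rw [h2, h]
  rw [one_div, ← Real.rpow_neg_one s, ← Real.rpow_mul hs.le]
  ring_nf

lemma aux_translate (α s u : ℝ) (hα₁ : 0 < α) (hα₂ : α < 1) (hs : 0 < s) :
    IntegrableOn (fun t : ℝ => Real.exp (-s * t) * (t - u) ^ (-α)) (Ioi u) ∧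
    ∫ t in Ioi u, Real.exp (-s * t) * (t - u) ^ (-α)
      = Real.exp (-s * u) * (s ^ (α - 1) * Real.Gamma (1 - α)) := by
  have hmp : MeasurePreserving (fun v : ℝ => v + u) volume volume :=
    measurePreserving_add_right volume u
  have hemb : MeasurableEmbedding (fun v : ℝ => v + u) :=
    (MeasurableEquiv.addRight u).measurableEmbedding
  have hpre : (fun v : ℝ => v + u) ⁻¹' (Ioi u) = Ioi 0 := by
    ext v; simp
  have heq : ∀ v ∈ Ioi (0:ℝ), Real.exp (-s * (v + u)) * (v + u - u) ^ (-α)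
      = Real.exp (-s * u) * (Real.exp (-s * v) * v ^ (-α)) := by
    intro v _
    rw [add_sub_cancel_right, show -s * (v + u) = -s * u + -s * v by ring, Real.exp_add,
      mul_assoc]
  constructor
  · have := (hmp.restrict_preimage_emb hemb (Ioi u)).integrable_comp_emb hemb
      (g := fun t : ℝ => Real.exp (-s * t) * (t - u) ^ (-α))
    rw [hpre] at this
    rw [IntegrableOn, ← this]
    apply Integrable.congr ((aux_gamma_int α s hα₁ hα₂ hs).const_mul (Real.exp (-s * u)))
    filter_upwards [ae_restrict_mem measurableSet_Ioi] with v hv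
    exact (heq v hv).symm
  · rw [← hmp.setIntegral_preimage_emb hemb
      (fun t : ℝ => Real.exp (-s * t) * (t - u) ^ (-α)) (Ioi u), hpre]
    rw [setIntegral_congr_fun measurableSet_Ioi heq, integral_const_mul,
      aux_gamma_val α s hα₁ hα₂ hs]

lemma aux_parts (f : ℝ → ℝ) (hf : ContDiff ℝ 1 f) (M c : ℝ) (hM : 0 < M) (hc : 0 ≤ c)
    (hbound : ∀ t : ℝ, 0 ≤ t → |f t| ≤ M * Real.exp (c * t))
    (hbound' : ∀ t : ℝ, 0 ≤ t → |deriv f t| ≤ M * Real.exp (c * t))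
    (s : ℝ) (hs : c < s) :
    IntegrableOn (fun t : ℝ => Real.exp (-s * t) * f t) (Ioi 0) ∧
    IntegrableOn (fun t : ℝ => Real.exp (-s * t) * deriv f t) (Ioi 0) ∧
    ∫ u in Ioi (0:ℝ), Real.exp (-s * u) * deriv f u
      = s * (∫ t in Ioi (0:ℝ), Real.exp (-s * t) * f t) - f 0 := by
  have hsc : (0:ℝ) < s - c := by linarith
  have hcont : Continuous f := hf.continuous
  have hcd : Continuous (deriv f) := hf.continuous_deriv le_rfl
  have hdom : IntegrableOn (fun t : ℝ => M * Real.exp (-(s - c) * t)) (Ioi 0) :=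
    (exp_neg_integrableOn_Ioi 0 hsc).const_mul M
  have hbd : ∀ (h : ℝ → ℝ), (∀ t : ℝ, 0 ≤ t → |h t| ≤ M * Real.exp (c * t)) →
      ∀ᵐ t ∂(volume.restrict (Ioi (0:ℝ))),
        ‖Real.exp (-s * t) * h t‖ ≤ ‖M * Real.exp (-(s - c) * t)‖ := by
    intro h hb
    filter_upwards [ae_restrict_mem measurableSet_Ioi] with t ht
    have h1 : |Real.exp (-s * t) * h t| = Real.exp (-s * t) * |h t| := by
      rw [abs_mul, abs_of_pos (Real.exp_pos _)]
    have h2 : Real.exp (-s * t) * |h t| ≤ Real.exp (-s * t) * (M * Real.exp (c * t)) :=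
      mul_le_mul_of_nonneg_left (hb t (le_of_lt ht)) (Real.exp_pos _).le
    have h3 : Real.exp (-s * t) * (M * Real.exp (c * t)) = M * Real.exp (-(s - c) * t) := by
      rw [show (-(s-c) * t) = -s * t + c * t by ring, Real.exp_add]; ring
    rw [Real.norm_eq_abs, Real.norm_eq_abs, h1,
      abs_of_pos (by positivity : (0:ℝ) < M * Real.exp (-(s - c) * t))]
    rw [h3] at h2; exact h2
  have int1 : IntegrableOn (fun t : ℝ => Real.exp (-s * t) * f t) (Ioi 0) :=
    Integrable.mono hdom ((Continuous.mul (Real.continuous_exp.comp (continuous_const.mul continuous_id)) hcont).aestronglyMeasurable.restrict)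
      (hbd f hbound)
  have int2 : IntegrableOn (fun t : ℝ => Real.exp (-s * t) * deriv f t) (Ioi 0) :=
    Integrable.mono hdom ((Continuous.mul (Real.continuous_exp.comp (continuous_const.mul continuous_id)) hcd).aestronglyMeasurable.restrict)
      (hbd (deriv f) hbound')
  refine ⟨int1, int2, ?_⟩
  set G : ℝ → ℝ := fun t => Real.exp (-s * t) * f t with hG
  have hderiv : ∀ t : ℝ, HasDerivAt G
      (Real.exp (-s * t) * deriv f t - s * (Real.exp (-s * t) * f t)) t := by
    intro t
    have h1 : HasDerivAt (fun t : ℝ => Real.exp (-s * t)) (Real.exp (-s * t) * (-s)) t := by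
      have := ((hasDerivAt_id t).const_mul (-s)).exp
      simpa using this
    have h2 : HasDerivAt f (deriv f t) t :=
      ((hf.differentiable one_ne_zero) t).hasDerivAt
    have : HasDerivAt (fun t : ℝ => Real.exp (-s * t) * f t) _ t := h1.mul h2
    convert this using 1
    ring
  have htend : Tendsto G atTop (nhds 0) := by
    apply squeeze_zero_norm' (a := fun t => M * Real.exp (-(s - c) * t))
    · filter_upwards [eventually_ge_atTop (0:ℝ)] with t ht
      have := hbd f hbound
      have h1 : |Real.exp (-s * t) * f t| = Real.exp (-s * t) * |f t| := by
        rw [abs_mul, abs_of_pos (Real.exp_pos _)]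
      have h2 : Real.exp (-s * t) * |f t| ≤ Real.exp (-s * t) * (M * Real.exp (c * t)) :=
        mul_le_mul_of_nonneg_left (hbound t ht) (Real.exp_pos _).le
      have h3 : Real.exp (-s * t) * (M * Real.exp (c * t)) = M * Real.exp (-(s - c) * t) := by
        rw [show (-(s-c) * t) = -s * t + c * t by ring, Real.exp_add]; ring
      rw [Real.norm_eq_abs, h1]
      rw [h3] at h2; exact h2
    · rw [show (0:ℝ) = M * 0 by ring]
      exact (Real.tendsto_exp_atBot.comp
        (tendsto_id.const_mul_atTop_of_neg (by linarith))).const_mul M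
  have hFTC : ∫ t in Ioi (0:ℝ),
      (Real.exp (-s * t) * deriv f t - s * (Real.exp (-s * t) * f t)) = 0 - G 0 :=
    integral_Ioi_of_hasDerivAt_of_tendsto' (fun x _ => hderiv x)
      (int2.sub (int1.const_mul s)) htend
  have hG0 : G 0 = f 0 := by simp [hG]
  have i3 : IntegrableOn (fun u : ℝ =>
      Real.exp (-s * u) * deriv f u - s * (Real.exp (-s * u) * f u)) (Ioi 0) :=
    int2.sub (int1.const_mul s)
  have i4 : IntegrableOn (fun u : ℝ => s * (Real.exp (-s * u) * f u)) (Ioi 0) :=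
    int1.const_mul s
  have : ∫ u in Ioi (0:ℝ), Real.exp (-s * u) * deriv f u
      = ∫ u in Ioi (0:ℝ), ((Real.exp (-s * u) * deriv f u - s * (Real.exp (-s * u) * f u))
          + s * (Real.exp (-s * u) * f u)) := by
    congr 1; funext u; ring
  rw [this, integral_add i3 i4, hFTC, integral_const_mul, hG0]
  ring



/-- For `0 < α < 1`, `f` continuously differentiable with `|f(t)| ≤ M e^{ct}` and
`|f'(t)| ≤ M e^{ct}` on `[0,∞)`, and `s > c`, the Laplace transform of the left
Caputo fractional derivative of `f` of order `α` satisfies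
`L{ᶜD_{0+}^α f}(s) = s^α L{f}(s) − s^{α−1} f(0)`. -/
theorem laplace_caputoDeriv (α : ℝ) (hα₁ : 0 < α) (hα₂ : α < 1)
    (f : ℝ → ℝ) (hf : ContDiff ℝ 1 f) (M c : ℝ) (hM : 0 < M) (hc : 0 ≤ c)
    (hbound : ∀ t : ℝ, 0 ≤ t → |f t| ≤ M * Real.exp (c * t))
    (hbound' : ∀ t : ℝ, 0 ≤ t → |deriv f t| ≤ M * Real.exp (c * t))
    (s : ℝ) (hs : c < s) :
    ∫ t in Set.Ioi (0 : ℝ),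
        Real.exp (-s * t) *
          ((1 / Real.Gamma (1 - α)) * ∫ u in (0 : ℝ)..t, (t - u) ^ (-α) * deriv f u) =
      s ^ α * (∫ t in Set.Ioi (0 : ℝ), Real.exp (-s * t) * f t) -
        s ^ (α - 1) * f 0 := by
  have hs0 : (0:ℝ) < s := lt_of_le_of_lt hc hs
  have hΓ : 0 < Real.Gamma (1 - α) := Real.Gamma_pos_of_pos (by linarith)
  have hcd : Continuous (deriv f) := hf.continuous_deriv le_rfl
  set C : ℝ := s ^ (α - 1) * Real.Gamma (1 - α) with hC
  have hCpos : 0 < C := mul_pos (Real.rpow_pos_of_pos hs0 _) hΓ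
  set S : Set (ℝ × ℝ) := {q : ℝ × ℝ | 0 < q.2 ∧ q.2 < q.1} with hSdef
  set φ : ℝ × ℝ → ℝ :=
    fun q => Real.exp (-s * q.1) * ((q.1 - q.2) ^ (-α) * deriv f q.2) with hφdef
  set F : ℝ × ℝ → ℝ := S.indicator φ with hFdef
  have hSmeas : MeasurableSet S :=
    (measurableSet_lt measurable_const measurable_snd).inter
      (measurableSet_lt measurable_snd measurable_fst)
  have hφcont : ContinuousOn φ S := by
    intro q hq
    have hsub : ContinuousAt (fun q : ℝ × ℝ => q.1 - q.2) q :=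
      (continuous_fst.sub continuous_snd).continuousAt
    have hrp : ContinuousAt (fun q : ℝ × ℝ => (q.1 - q.2) ^ (-α)) q :=
      hsub.rpow_const (Or.inl (ne_of_gt (sub_pos.mpr hq.2)))
    exact (((Real.continuous_exp.comp (continuous_const.mul continuous_fst)).continuousAt).mul
      (hrp.mul ((hcd.comp continuous_snd).continuousAt))).continuousWithinAt
  have hFmeas : AEStronglyMeasurable F (volume.prod volume) :=
    (aestronglyMeasurable_indicator_iff hSmeas).mpr (hφcont.aestronglyMeasurable hSmeas)
  have hslice_eq : ∀ u : ℝ, 0 < u → (fun t => F (t, u)) =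
      Set.indicator (Set.Ioi u) (fun t => (Real.exp (-s * t) * (t - u) ^ (-α)) * deriv f u) := by
    intro u hu; funext t
    by_cases ht : u < t
    · rw [hFdef, Set.indicator_of_mem (show (t, u) ∈ S from ⟨hu, ht⟩),
        Set.indicator_of_mem (show t ∈ Set.Ioi u from ht)]
      show Real.exp (-s * t) * ((t - u) ^ (-α) * deriv f u) = _
      ring
    · rw [hFdef, Set.indicator_of_notMem (show (t, u) ∉ S from fun h => ht h.2),
        Set.indicator_of_notMem (show t ∉ Set.Ioi u from ht)]
  have hslice_zero : ∀ u : ℝ, u ≤ 0 → (fun t => F (t, u)) = fun _ => (0:ℝ) := by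
    intro u hu; funext t
    exact Set.indicator_of_notMem
      (show (t, u) ∉ S from fun h => absurd h.1 (not_lt.mpr hu)) _
  have hsliceint : ∀ u : ℝ, Integrable (fun t => F (t, u)) volume := by
    intro u
    rcases le_or_gt u 0 with hu | hu
    · rw [hslice_zero u hu]; exact integrable_zero _ _ _
    · rw [hslice_eq u hu, integrable_indicator_iff measurableSet_Ioi]
      exact (aux_translate α s u hα₁ hα₂ hs0).1.mul_const _
  have hnorm : ∀ u : ℝ, (∫ t, ‖F (t, u)‖) =
      Set.indicator (Set.Ioi 0) (fun u => (Real.exp (-s * u) * C) * |deriv f u|) u := by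
    intro u
    rcases le_or_gt u 0 with hu | hu
    · rw [Set.indicator_of_notMem (show u ∉ Set.Ioi (0:ℝ) from not_lt.mpr hu)]
      have h0 : ∀ t : ℝ, F (t, u) = 0 := fun t => congrFun (hslice_zero u hu) t
      simp [h0]
    · rw [Set.indicator_of_mem (show u ∈ Set.Ioi (0:ℝ) from hu)]
      have hpt : ∀ t : ℝ, ‖F (t, u)‖ = Set.indicator (Set.Ioi u)
          (fun t => (Real.exp (-s * t) * (t - u) ^ (-α)) * |deriv f u|) t := by
        intro t
        rw [congrFun (hslice_eq u hu) t, norm_indicator_eq_indicator_norm]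
        by_cases htu : t ∈ Set.Ioi u
        · rw [Set.indicator_of_mem htu, Set.indicator_of_mem htu]
          rw [Real.norm_eq_abs, abs_mul, abs_mul,
            abs_of_pos (Real.exp_pos _),
            abs_of_nonneg (Real.rpow_nonneg (sub_nonneg.mpr (le_of_lt htu)) _)]
        · rw [Set.indicator_of_notMem htu, Set.indicator_of_notMem htu]
      rw [integral_congr_ae (Filter.Eventually.of_forall hpt),
        integral_indicator measurableSet_Ioi, integral_mul_const,
        (aux_translate α s u hα₁ hα₂ hs0).2]
  have hψint : Integrable (fun u => ∫ t, ‖F (t, u)‖) volume := by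
    rw [show (fun u => ∫ t, ‖F (t, u)‖) =
      Set.indicator (Set.Ioi 0) (fun u => (Real.exp (-s * u) * C) * |deriv f u|) from
      funext hnorm, integrable_indicator_iff measurableSet_Ioi]
    apply Integrable.mono
      ((exp_neg_integrableOn_Ioi 0 (show (0:ℝ) < s - c by linarith)).const_mul (C * M))
    · exact (((Real.continuous_exp.comp (continuous_const.mul continuous_id)).mul
        continuous_const).mul hcd.abs).aestronglyMeasurable.restrict
    · filter_upwards [ae_restrict_mem measurableSet_Ioi] with u hu
      rw [Real.norm_eq_abs, Real.norm_eq_abs,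
        abs_of_nonneg (show (0:ℝ) ≤ (Real.exp (-s * u) * C) * |deriv f u| by positivity),
        abs_of_pos (show (0:ℝ) < C * M * Real.exp (-(s - c) * u) by positivity)]
      have h2 : (Real.exp (-s * u) * C) * |deriv f u|
          ≤ (Real.exp (-s * u) * C) * (M * Real.exp (c * u)) :=
        mul_le_mul_of_nonneg_left (hbound' u (le_of_lt hu)) (by positivity)
      calc (Real.exp (-s * u) * C) * |deriv f u|
          ≤ (Real.exp (-s * u) * C) * (M * Real.exp (c * u)) := h2
        _ = C * M * Real.exp (-(s - c) * u) := by
            rw [show (-(s - c) * u) = -s * u + c * u by ring, Real.exp_add]; ring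
  have hFint : Integrable F (volume.prod volume) :=
    (integrable_prod_iff' hFmeas).mpr ⟨Filter.Eventually.of_forall hsliceint, hψint⟩
  have hswap : (∫ t, ∫ u, F (t, u)) = ∫ u, ∫ t, F (t, u) :=
    integral_integral_swap (f := fun t u => F (t, u)) hFint
  obtain ⟨intf, intg, hparts⟩ := aux_parts f hf M c hM hc hbound hbound' s hs
  have hTinner : ∀ u : ℝ, (∫ t, F (t, u)) =
      Set.indicator (Set.Ioi 0) (fun u => (Real.exp (-s * u) * C) * deriv f u) u := by
    intro u
    rcases le_or_gt u 0 with hu | hu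
    · rw [hslice_zero u hu,
        Set.indicator_of_notMem (show u ∉ Set.Ioi (0:ℝ) from not_lt.mpr hu)]
      simp
    · rw [hslice_eq u hu, integral_indicator measurableSet_Ioi, integral_mul_const,
        (aux_translate α s u hα₁ hα₂ hs0).2,
        Set.indicator_of_mem (show u ∈ Set.Ioi (0:ℝ) from hu)]
  have hR : (∫ u, ∫ t, F (t, u)) =
      C * (s * (∫ t in Set.Ioi (0:ℝ), Real.exp (-s * t) * f t) - f 0) := by
    calc (∫ u, ∫ t, F (t, u))
        = ∫ u, Set.indicator (Set.Ioi 0)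
            (fun u => (Real.exp (-s * u) * C) * deriv f u) u :=
          integral_congr_ae (Filter.Eventually.of_forall hTinner)
      _ = ∫ u in Set.Ioi (0:ℝ), (Real.exp (-s * u) * C) * deriv f u :=
          integral_indicator measurableSet_Ioi
      _ = ∫ u in Set.Ioi (0:ℝ), C * (Real.exp (-s * u) * deriv f u) := by
          congr 1; funext u; ring
      _ = C * ∫ u in Set.Ioi (0:ℝ), Real.exp (-s * u) * deriv f u := integral_const_mul _ _
      _ = C * (s * (∫ t in Set.Ioi (0:ℝ), Real.exp (-s * t) * f t) - f 0) := by rw [hparts]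
  have hLinner : ∀ t ∈ Set.Ioi (0:ℝ),
      Real.exp (-s * t) *
        ((1 / Real.Gamma (1 - α)) * ∫ u in (0:ℝ)..t, (t - u) ^ (-α) * deriv f u)
      = (1 / Real.Gamma (1 - α)) * ∫ u, F (t, u) := by
    intro t ht
    have h1 : (fun u => F (t, u)) = Set.indicator (Set.Ioo 0 t)
        (fun u => Real.exp (-s * t) * ((t - u) ^ (-α) * deriv f u)) := by
      funext u
      by_cases hu : u ∈ Set.Ioo 0 t
      · rw [hFdef, Set.indicator_of_mem (show (t, u) ∈ S from ⟨hu.1, hu.2⟩),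
          Set.indicator_of_mem hu]
      · rw [hFdef, Set.indicator_of_notMem (show (t, u) ∉ S from fun h => hu ⟨h.1, h.2⟩),
          Set.indicator_of_notMem hu]
    rw [h1, integral_indicator measurableSet_Ioo, integral_const_mul,
      intervalIntegral.integral_of_le (le_of_lt ht), integral_Ioc_eq_integral_Ioo]
    ring
  calc ∫ t in Set.Ioi (0:ℝ), Real.exp (-s * t) *
        ((1 / Real.Gamma (1 - α)) * ∫ u in (0:ℝ)..t, (t - u) ^ (-α) * deriv f u)
      = ∫ t in Set.Ioi (0:ℝ), (1 / Real.Gamma (1 - α)) * ∫ u, F (t, u) :=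
        setIntegral_congr_fun measurableSet_Ioi hLinner
    _ = (1 / Real.Gamma (1 - α)) * ∫ t in Set.Ioi (0:ℝ), ∫ u, F (t, u) :=
        integral_const_mul _ _
    _ = (1 / Real.Gamma (1 - α)) * ∫ t, ∫ u, F (t, u) := by
        rw [setIntegral_eq_integral_of_forall_compl_eq_zero]
        intro t ht
        have h0 : ∀ u : ℝ, F (t, u) = 0 := by
          intro u
          refine Set.indicator_of_notMem ?_ _
          intro h
          exact absurd (lt_trans h.1 h.2) (by simpa using ht)
        simp [h0]
    _ = (1 / Real.Gamma (1 - α)) *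
        (C * (s * (∫ t in Set.Ioi (0:ℝ), Real.exp (-s * t) * f t) - f 0)) := by
        rw [hswap, hR]
    _ = s ^ α * (∫ t in Set.Ioi (0:ℝ), Real.exp (-s * t) * f t) - s ^ (α - 1) * f 0 := by
        rw [hC, show s ^ α = s ^ (α - 1) * s by
          rw [← Real.rpow_add_one (ne_of_gt hs0) (α - 1)]; norm_num]
        field_simp
end
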